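/- Let x ∈ [0,1] be non-dyadic with binary digits ε_k, let I_n = ε_1+⋯+ε_n, and suppose D_1(x) := lim_{n→∞} I_n/n exists with 0 < D_1(x) < 1, and set D_0(x) = 1 - D_1(x). If a^{D_0(x)}·(1-a)^{D_1(x)} < 1/2, then L_a'(x) = 0. -/

import Mathlib

open Topology Filter Set

/-- The de Rham functional equation characterizing Lebesgue's singular function `L_a`
on `[0,1]`, together with continuity. -/
def deRham (a : ℝ) (L : ℝ → ℝ) : Prop :=
  ContinuousOn L (Set.Icc 0 1) ∧
  (∀ x ∈ Set.Icc (0:ℝ) (1/2), L x = a * L (2*x)) ∧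
  (∀ x ∈ Set.Icc (1/2:ℝ) 1, L x = (1-a) * L (2*x - 1) + a)

lemma zdiv_tendsto (K : ℕ → ℕ) (c : ℝ) (hc : 0 < c)
    (hK : Tendsto (fun n : ℕ => (K n : ℝ)/n) atTop (𝓝 c))
    (z : ℕ → ℕ) (hz1 : ∀ n, n + 2 ≤ z n) (hz2 : ∀ n, K (z n - 1) = K (n+1)) :
    Tendsto (fun n : ℕ => (z n : ℝ)/n) atTop (𝓝 1) := by
  rw [Metric.tendsto_atTop]
  intro e he
  set δ : ℝ := c * e / (e + 4) with hδ
  have hδ0 : 0 < δ := by positivity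
  have hδc : δ < c := by
    rw [hδ, div_lt_iff₀ (by linarith)]
    nlinarith
  rw [Metric.tendsto_atTop] at hK
  obtain ⟨N0, hN0⟩ := hK δ hδ0
  have hbd : ∀ m : ℕ, N0 ≤ m → 1 ≤ m →
      (c - δ) * m < (K m : ℝ) ∧ (K m : ℝ) < (c+δ) * m := by
    intro m hm hm1
    have h2 := hN0 m hm
    rw [Real.dist_eq, abs_lt] at h2
    have hmpos : (0:ℝ) < m := by exact_mod_cast hm1
    constructor
    · have h3 : c - δ < (K m : ℝ)/m := by linarith [h2.1]
      exact (lt_div_iff₀ hmpos).mp h3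
    · have h3 : (K m : ℝ)/m < c + δ := by linarith [h2.2]
      exact (div_lt_iff₀ hmpos).mp h3
  obtain ⟨N1, hN1⟩ := exists_nat_gt ((4:ℝ)/e + 2 + c)
  refine ⟨max (N0 + 1) N1, fun n hn => ?_⟩
  have hnN0 : N0 ≤ n := le_trans (Nat.le_succ _) (le_trans (le_max_left _ _) hn)
  have hnN1 : (4:ℝ)/e + 2 + c < n := lt_of_lt_of_le hN1 (by exact_mod_cast le_trans (le_max_right _ _) hn)
  have hn1 : 1 ≤ n := le_trans (by omega : 1 ≤ N0 + 1) (le_trans (le_max_left _ _) hn)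
  have hnpos : (0:ℝ) < n := by exact_mod_cast hn1
  have hz1n := hz1 n
  have h1 : (c - δ) * ((z n : ℝ) - 1) < (c + δ) * (n + 1) := by
    have hl := (hbd (z n - 1) (by omega) (by omega)).1
    have hr := (hbd (n+1) (by omega) (by omega)).2
    rw [hz2 n] at hl
    have hcast : ((z n - 1 : ℕ) : ℝ) = (z n : ℝ) - 1 := by
      have h4 : 1 ≤ z n := by omega
      push_cast [Nat.cast_sub h4]; ring
    rw [hcast] at hl
    calc (c - δ) * ((z n : ℝ) - 1) < (K (n+1) : ℝ) := hl
      _ < (c + δ) * (n + 1) := by exact_mod_cast hr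
  have hzn_lb : (1:ℝ) ≤ (z n : ℝ)/n := by
    rw [le_div_iff₀ hnpos]
    have : (n:ℝ) + 2 ≤ z n := by exact_mod_cast hz1n
    linarith
  have hcd : 0 < c - δ := by linarith
  have hratio : c + δ = (1 + e/2) * (c - δ) := by
    rw [hδ]; field_simp; ring
  have hzn_ub : (z n : ℝ)/n < 1 + e := by
    rw [div_lt_iff₀ hnpos]
    have key : (z n : ℝ) - 1 < (1 + e/2) * ((n:ℝ)+1) := by
      rw [hratio] at h1
      have he2 : (0:ℝ) < 1 + e/2 := by linarith
      nlinarith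
    have h4e : (4:ℝ)/e * e = 4 := div_mul_cancel₀ _ (ne_of_gt he)
    nlinarith [mul_lt_mul_of_pos_right hnN1 he]
  rw [Real.dist_eq, abs_lt]
  constructor <;> linarith

lemma deRham_zero (a : ℝ) (ha1 : a < 1) (L : ℝ → ℝ) (hL : deRham a L) : L 0 = 0 := by
  have h := hL.2.1 0 ⟨le_refl 0, by norm_num⟩
  have h2 : (1 - a) * L 0 = 0 := by
    have : (2:ℝ) * 0 = 0 := by norm_num
    rw [this] at h; linarith
  rcases mul_eq_zero.mp h2 with h' | h'
  · linarith
  · exact h'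

lemma deRham_key (a : ℝ) (ha0 : 0 < a) (ha1 : a < 1) (L : ℝ → ℝ) (hL : deRham a L)
    (ε : ℕ → ℕ) (hε : ∀ n, ε n ≤ 1) :
    ∀ n : ℕ, ∀ y ∈ Set.Icc (0:ℝ) 1,
    L ((∑ k ∈ Finset.range n, (ε (k+1):ℝ)/2^(k+1)) + y / 2^n)
      = L (∑ k ∈ Finset.range n, (ε (k+1):ℝ)/2^(k+1))
        + (∏ k ∈ Finset.range n, (if ε (k+1) = 1 then 1-a else a)) * L y := by
  have L0 := deRham_zero a ha1 L hL
  intro n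
  induction n with
  | zero => intro y hy; simp [L0]
  | succ n ih =>
    set S : ℝ := ∑ k ∈ Finset.range n, (ε (k+1):ℝ)/2^(k+1) with hS
    set P : ℝ := ∏ k ∈ Finset.range n, (if ε (k+1) = 1 then 1-a else a) with hP
    set w : ℝ := if ε (n+1) = 1 then 1-a else a with hw
    have hSsucc : ∑ k ∈ Finset.range (n+1), (ε (k+1):ℝ)/2^(k+1)
        = S + (ε (n+1):ℝ)/2^(n+1) := by rw [Finset.sum_range_succ]
    have hPsucc : ∏ k ∈ Finset.range (n+1), (if ε (k+1) = 1 then 1-a else a)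
        = P * w := by rw [Finset.prod_range_succ]
    have key2 : ∀ y ∈ Set.Icc (0:ℝ) 1,
        L (S + ((ε (n+1):ℝ) + y)/2^(n+1)) = L S + P * (w * L y + (ε (n+1):ℝ) * a) := by
      intro y hy
      have harg : ((ε (n+1):ℝ) + y)/2^(n+1) = (((ε (n+1):ℝ) + y)/2)/2^n := by
        rw [pow_succ]; ring
      rw [harg]
      have he := hε (n+1)
      interval_cases h : ε (n+1)
      · have hy2 : y/2 ∈ Set.Icc (0:ℝ) 1 := ⟨by linarith [hy.1], by linarith [hy.2]⟩
        have h0 : (((0:ℕ):ℝ) + y)/2 = y/2 := by norm_num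
        rw [h0, ih (y/2) hy2]
        have hfe : L (y/2) = a * L y := by
          have h5 := hL.2.1 (y/2) ⟨by linarith [hy.1], by linarith [hy.2]⟩
          have h6 : (2:ℝ) * (y/2) = y := by ring
          rw [h6] at h5; exact h5
        rw [hfe]
        simp [hw]
      · have hmid : (((1:ℕ):ℝ) + y)/2 ∈ Set.Icc (0:ℝ) 1 :=
          ⟨by push_cast; linarith [hy.1], by push_cast; linarith [hy.2]⟩
        rw [ih _ hmid]
        have hfe : L ((((1:ℕ):ℝ) + y)/2) = (1-a) * L y + a := by
          have h5 := hL.2.2 ((((1:ℕ):ℝ) + y)/2)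
            ⟨by push_cast; linarith [hy.1], by push_cast; linarith [hy.2]⟩
          have h6 : (2:ℝ) * ((((1:ℕ):ℝ) + y)/2) - 1 = y := by push_cast; ring
          rw [h6] at h5; exact h5
        rw [hfe]
        simp [hw]
    intro y hy
    have hLS1 : L (S + (ε (n+1):ℝ)/2^(n+1)) = L S + P * ((ε (n+1):ℝ) * a) := by
      have := key2 0 ⟨le_refl 0, by norm_num⟩
      rw [add_zero, L0, mul_zero, zero_add] at this
      exact this
    have harg2 : S + (ε (n+1):ℝ)/2^(n+1) + y/2^(n+1) = S + ((ε (n+1):ℝ) + y)/2^(n+1) := by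
      ring
    rw [hSsucc, hPsucc, harg2, key2 y hy, hLS1]
    ring

theorem deriv_zero_of_density (a : ℝ) (ha0 : 0 < a) (ha1 : a < 1)
    (ha : a ≠ 1/2) (L : ℝ → ℝ) (hL : deRham a L)
    (ε : ℕ → ℕ) (hε : ∀ n, ε n ≤ 1)
    (hinf1 : ∀ N, ∃ n ≥ N, ε n = 1) (hinf0 : ∀ N, ∃ n ≥ N, ε n = 0)
    (x : ℝ) (hx : x = ∑' n : ℕ, (ε (n+1) : ℝ) / 2 ^ (n+1))
    (d : ℝ)
    (hd : Tendsto (fun n : ℕ => (∑ k ∈ Finset.range n, (ε (k+1) : ℝ)) / n)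
      atTop (𝓝 d))
    (hd0 : 0 < d) (hd1 : d < 1)
    (hcrit : a ^ (1 - d) * (1-a) ^ d < 1/2) :
    Tendsto (fun h : ℝ => (L (x+h) - L x) / h) (𝓝[≠] 0) (𝓝 0) := by
  -- basic objects
  set u : ℕ → ℝ := fun k => (ε (k+1) : ℝ) / 2 ^ (k+1) with hu_def
  set S : ℕ → ℝ := fun n => ∑ k ∈ Finset.range n, u k with hS_def
  set I : ℕ → ℕ := fun n => ∑ k ∈ Finset.range n, ε (k+1) with hI_def
  set P : ℕ → ℝ := fun n => ∏ k ∈ Finset.range n, (if ε (k+1) = 1 then 1-a else a) with hP_def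
  have ha1' : 0 < 1 - a := by linarith
  -- summability
  have hu_nonneg : ∀ k, 0 ≤ u k := by intro k; positivity
  have hu_le : ∀ k, u k ≤ ((2:ℝ)^(k+1))⁻¹ := by
    intro k
    rw [hu_def]
    have : (ε (k+1) : ℝ) ≤ 1 := by exact_mod_cast hε (k+1)
    rw [div_le_iff₀ (by positivity)]
    rw [inv_mul_cancel₀ (by positivity)]
    exact this
  have hhalf : ∀ m : ℕ, Summable (fun j : ℕ => ((2:ℝ)^(j+m+1))⁻¹) := by
    intro m
    have h1 : ∀ j : ℕ, ((2:ℝ)^(j+m+1))⁻¹ = ((2:ℝ)^(m+1))⁻¹ * ((2:ℝ)⁻¹)^j := by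
      intro j
      rw [inv_pow, ← mul_inv, ← pow_add]
      congr 2
      ring
    simp only [h1]
    exact (summable_geometric_of_lt_one (by norm_num) (by norm_num)).mul_left _
  have hgeom : ∀ m : ℕ, ∑' j : ℕ, ((2:ℝ)^(j+m+1))⁻¹ = ((2:ℝ)^m)⁻¹ := by
    intro m
    have h1 : ∀ j : ℕ, ((2:ℝ)^(j+m+1))⁻¹ = ((2:ℝ)^(m+1))⁻¹ * ((2:ℝ)⁻¹)^j := by
      intro j
      rw [inv_pow, ← mul_inv, ← pow_add]
      congr 2
      ring
    simp only [h1]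
    rw [tsum_mul_left]
    have h2 : ∑' j : ℕ, ((2:ℝ)⁻¹)^j = 2 := by
      rw [tsum_geometric_of_lt_one (by norm_num) (by norm_num)]
      norm_num
    rw [h2, pow_succ]
    field_simp
  have hu_sum : Summable u := by
    apply Summable.of_nonneg_of_le hu_nonneg hu_le
    have h1 : ∀ j : ℕ, ((2:ℝ)^(j+1))⁻¹ = ((2:ℝ)⁻¹) * ((2:ℝ)⁻¹)^j := by
      intro j; rw [← inv_pow, ← pow_succ']
    simp only [h1]
    exact (summable_geometric_of_lt_one (by norm_num) (by norm_num)).mul_left _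
  have htail_sum : ∀ n, Summable (fun k => u (k + n)) := fun n => (summable_nat_add_iff n).mpr hu_sum
  set r : ℕ → ℝ := fun n => ∑' k, u (k + n) with hr_def
  have hxr : ∀ n, x = S n + r n := by
    intro n
    rw [hx, ← hu_sum.sum_add_tsum_nat_add n]
  set gap : ℕ → ℝ := fun n => ((2:ℝ)^n)⁻¹ - r n with hgap_def
  have hgap_term_nonneg : ∀ n j, 0 ≤ ((2:ℝ)^(j+n+1))⁻¹ - u (j + n) := by
    intro n j
    have h1 := hu_le (j + n)
    have h2 : j + n + 1 = (j + n) + 1 := by ring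
    rw [h2]
    linarith
  have hgap_sum : ∀ n, Summable (fun j => ((2:ℝ)^(j+n+1))⁻¹ - u (j + n)) :=
    fun n => (hhalf n).sub (htail_sum n)
  have hgap_tsum : ∀ n, gap n = ∑' j : ℕ, (((2:ℝ)^(j+n+1))⁻¹ - u (j + n)) := by
    intro n
    rw [(hhalf n).tsum_sub (htail_sum n), hgeom n]
  -- lower bounds by single terms
  have hr_lb : ∀ n k, n + 1 ≤ k → ε k = 1 → ((2:ℝ)^k)⁻¹ ≤ r n := by
    intro n k hk hk1
    have hj : (k - n - 1) + n + 1 = k := by omega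
    have hterm : u ((k - n - 1) + n) = ((2:ℝ)^k)⁻¹ := by
      show (ε ((k-n-1) + n + 1) : ℝ) / 2 ^ ((k-n-1) + n + 1) = ((2:ℝ)^k)⁻¹
      rw [hj, hk1]
      norm_num
    calc ((2:ℝ)^k)⁻¹ = u ((k - n - 1) + n) := hterm.symm
      _ ≤ r n := Summable.le_tsum (htail_sum n) _ (fun j _ => hu_nonneg _)
  have hgap_lb : ∀ n k, n + 1 ≤ k → ε k = 0 → ((2:ℝ)^k)⁻¹ ≤ gap n := by
    intro n k hk hk0
    have hj : (k - n - 1) + n + 1 = k := by omega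
    have hterm : ((2:ℝ)^((k-n-1)+n+1))⁻¹ - u ((k - n - 1) + n) = ((2:ℝ)^k)⁻¹ := by
      show ((2:ℝ)^((k-n-1)+n+1))⁻¹ - (ε ((k-n-1) + n + 1) : ℝ) / 2 ^ ((k-n-1) + n + 1) = ((2:ℝ)^k)⁻¹
      rw [hj, hk0]
      norm_num
    rw [hgap_tsum n]
    calc ((2:ℝ)^k)⁻¹ = ((2:ℝ)^((k-n-1)+n+1))⁻¹ - u ((k - n - 1) + n) := hterm.symm
      _ ≤ _ := Summable.le_tsum (hgap_sum n) _ (fun j _ => hgap_term_nonneg n j)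
  have hr_pos : ∀ n, 0 < r n := by
    intro n
    obtain ⟨k, hk, hk1⟩ := hinf1 (n+1)
    exact lt_of_lt_of_le (by positivity) (hr_lb n k hk hk1)
  have hgap_pos : ∀ n, 0 < gap n := by
    intro n
    obtain ⟨k, hk, hk0⟩ := hinf0 (n+1)
    exact lt_of_lt_of_le (by positivity) (hgap_lb n k hk hk0)
  have hr_step : ∀ n, r (n+1) = r n - u n := by
    intro n
    have h1 := hxr n
    have h2 := hxr (n+1)
    have h3 : S (n+1) = S n + u n := Finset.sum_range_succ u n
    rw [h3] at h2
    linarith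
  have hr_anti : Antitone r := by
    apply antitone_nat_of_succ_le
    intro n
    rw [hr_step n]
    linarith [hu_nonneg n]
  have hgap_anti : Antitone gap := by
    apply antitone_nat_of_succ_le
    intro n
    show ((2:ℝ)^(n+1))⁻¹ - r (n+1) ≤ ((2:ℝ)^n)⁻¹ - r n
    rw [hr_step n]
    have h1 := hu_le n
    have h2 : ((2:ℝ)^n)⁻¹ - ((2:ℝ)^(n+1))⁻¹ = ((2:ℝ)^(n+1))⁻¹ := by
      rw [pow_succ]
      field_simp
      ring
    linarith
  -- z functions
  set z : ℕ → ℕ := fun n => Nat.find (hinf0 (n+2)) with hz_def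
  set z' : ℕ → ℕ := fun n => Nat.find (hinf1 (n+2)) with hz'_def
  have hz_ge : ∀ n, n + 2 ≤ z n := fun n => (Nat.find_spec (hinf0 (n+2))).1
  have hz_eq : ∀ n, ε (z n) = 0 := fun n => (Nat.find_spec (hinf0 (n+2))).2
  have hz'_ge : ∀ n, n + 2 ≤ z' n := fun n => (Nat.find_spec (hinf1 (n+2))).1
  have hz'_eq : ∀ n, ε (z' n) = 1 := fun n => (Nat.find_spec (hinf1 (n+2))).2
  have hz_run : ∀ n k, n + 2 ≤ k → k < z n → ε k = 1 := by
    intro n k h1 h2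
    have := Nat.find_min (hinf0 (n+2)) h2
    have h3 := hε k
    omega
  have hz'_run : ∀ n k, n + 2 ≤ k → k < z' n → ε k = 0 := by
    intro n k h1 h2
    have := Nat.find_min (hinf1 (n+2)) h2
    have h3 := hε k
    omega
  -- I facts
  have hI_le : ∀ n, I n ≤ n := by
    intro n
    calc I n ≤ ∑ k ∈ Finset.range n, 1 := Finset.sum_le_sum (fun k _ => hε (k+1))
      _ = n := by simp
  have hI_tendsto : Tendsto (fun n : ℕ => (I n : ℝ)/n) atTop (𝓝 d) := by
    have heq : (fun n : ℕ => (I n : ℝ)/n)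
        = fun n : ℕ => (∑ k ∈ Finset.range n, (ε (k+1) : ℝ)) / n := by
      funext n
      rw [hI_def]
      push_cast
      ring
    rw [heq]
    exact hd
  -- z / n → 1 via zdiv_tendsto
  have hIrun : ∀ n j, n + 1 + j ≤ z n - 1 → I (n+1+j) = I (n+1) + j := by
    intro n j
    induction j with
    | zero => intro _; rfl
    | succ j ih =>
      intro hj
      have hj' : n + 1 + j ≤ z n - 1 := by omega
      have h1 : n + 1 + (j+1) = (n + 1 + j) + 1 := by ring
      rw [h1]
      have h2 : I ((n+1+j)+1) = I (n+1+j) + ε (n+1+j+1) := Finset.sum_range_succ _ _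
      have h3 : ε (n+1+j+1) = 1 := by
        apply hz_run n
        · omega
        · have := hz_ge n; omega
      rw [h2, h3, ih hj']
      omega
  have hI'run : ∀ n j, n + 1 + j ≤ z' n - 1 → I (n+1+j) = I (n+1) := by
    intro n j
    induction j with
    | zero => intro _; rfl
    | succ j ih =>
      intro hj
      have hj' : n + 1 + j ≤ z' n - 1 := by omega
      have h1 : n + 1 + (j+1) = (n + 1 + j) + 1 := by ring
      rw [h1]
      have h2 : I ((n+1+j)+1) = I (n+1+j) + ε (n+1+j+1) := Finset.sum_range_succ _ _
      have h3 : ε (n+1+j+1) = 0 := by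
        apply hz'_run n
        · omega
        · have := hz'_ge n; omega
      rw [h2, h3, ih hj']
      omega
  have hK_tendsto : Tendsto (fun m : ℕ => ((m - I m : ℕ) : ℝ)/m) atTop (𝓝 (1 - d)) := by
    have hbase : Tendsto (fun m : ℕ => 1 - (I m : ℝ)/m) atTop (𝓝 (1 - d)) :=
      tendsto_const_nhds.sub hI_tendsto
    apply hbase.congr'
    filter_upwards [eventually_ge_atTop 1] with m hm
    have hm0 : (m:ℝ) ≠ 0 := by positivity
    rw [Nat.cast_sub (hI_le m)]
    field_simp
  have hz_tendsto : Tendsto (fun n : ℕ => (z n : ℝ)/n) atTop (𝓝 1) := by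
    apply zdiv_tendsto (fun m => m - I m) (1 - d) (by linarith) hK_tendsto z hz_ge
    intro n
    have h1 : I (z n - 1) = I (n+1) + (z n - 1 - (n+1)) := by
      have := hIrun n (z n - 1 - (n+1)) (by have := hz_ge n; omega)
      have h2 : n + 1 + (z n - 1 - (n+1)) = z n - 1 := by have := hz_ge n; omega
      rw [h2] at this
      omega
    have h2 := hI_le (n+1)
    have h3 := hz_ge n
    show z n - 1 - I (z n - 1) = n + 1 - I (n + 1)
    omega
  have hz'_tendsto : Tendsto (fun n : ℕ => (z' n : ℝ)/n) atTop (𝓝 1) := by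
    apply zdiv_tendsto I d hd0 hI_tendsto z' hz'_ge
    intro n
    have := hI'run n (z' n - 1 - (n+1)) (by have := hz'_ge n; omega)
    have h2 : n + 1 + (z' n - 1 - (n+1)) = z' n - 1 := by have := hz'_ge n; omega
    rw [h2] at this
    exact this
  -- P formula and limits
  have hP_pos : ∀ n, 0 < P n := by
    intro n
    apply Finset.prod_pos
    intro k _
    split <;> linarith
  have hP_pow : ∀ n, P n = a^(n - I n) * (1-a)^(I n) := by
    intro n
    induction n with
    | zero => simp [hP_def, hI_def]
    | succ n ih =>
      have hPs : P (n+1) = P n * (if ε (n+1) = 1 then 1-a else a) :=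
        Finset.prod_range_succ _ _
      have hIs : I (n+1) = I n + ε (n+1) := Finset.sum_range_succ _ _
      have hle := hI_le n
      have he := hε (n+1)
      interval_cases h : ε (n+1)
      · have h1 : I (n+1) = I n := by omega
        have h2 : n + 1 - I (n+1) = (n - I n) + 1 := by omega
        rw [hPs, ih, h2, h1, pow_succ]
        norm_num
        ring
      · have h1 : I (n+1) = I n + 1 := by omega
        have h2 : n + 1 - I (n+1) = n - I n := by omega
        rw [hPs, ih, h2, h1, pow_succ]
        norm_num
        ring
  have hlog : Real.log 2 + ((1-d) * Real.log a + d * Real.log (1-a)) < 0 := by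
    have hρ : (0:ℝ) < a ^ (1-d) * (1-a) ^ d :=
      mul_pos (Real.rpow_pos_of_pos ha0 _) (Real.rpow_pos_of_pos ha1' _)
    have h2ρ : (0:ℝ) < 2 * (a ^ (1-d) * (1-a) ^ d) := by linarith
    have h1 : 2 * (a ^ (1-d) * (1-a) ^ d) < 1 := by linarith
    have h2 := Real.log_neg h2ρ h1
    rw [Real.log_mul (by norm_num) (ne_of_gt hρ),
      Real.log_mul (ne_of_gt (Real.rpow_pos_of_pos ha0 _)) (ne_of_gt (Real.rpow_pos_of_pos ha1' _)),
      Real.log_rpow ha0, Real.log_rpow ha1'] at h2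
    linarith
  set l : ℝ := Real.log 2 + ((1-d) * Real.log a + d * Real.log (1-a)) with hldef
  have hAgen : ∀ (w : ℕ → ℕ), Tendsto (fun n : ℕ => (w n:ℝ)/n) atTop (𝓝 1) →
      Tendsto (fun n => P n * 2^(w n)) atTop (𝓝 0) := by
    intro w hw
    set G : ℕ → ℝ := fun n => ((n:ℝ) - (I n:ℝ)) * Real.log a + (I n:ℝ) * Real.log (1-a)
      + (w n:ℝ) * Real.log 2 with hGdef
    have hexp : ∀ n, P n * 2^(w n) = Real.exp (G n) := by
      intro n
      rw [hP_pow n, hGdef]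
      simp only []
      rw [Real.exp_add, Real.exp_add]
      have e1 : Real.exp (((n:ℝ) - (I n:ℝ)) * Real.log a) = a ^ (n - I n) := by
        rw [← Nat.cast_sub (hI_le n), Real.exp_nat_mul, Real.exp_log ha0]
      have e2 : Real.exp ((I n:ℝ) * Real.log (1-a)) = (1-a) ^ (I n) := by
        rw [Real.exp_nat_mul, Real.exp_log ha1']
      have e3 : Real.exp ((w n:ℝ) * Real.log 2) = (2:ℝ) ^ (w n) := by
        rw [Real.exp_nat_mul, Real.exp_log (by norm_num)]
      rw [e1, e2, e3]
    have hGdiv : Tendsto (fun n : ℕ => G n / n) atTop (𝓝 l) := by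
      have hbase : Tendsto (fun n : ℕ => (1 - (I n:ℝ)/n) * Real.log a
          + ((I n:ℝ)/n) * Real.log (1-a) + ((w n:ℝ)/n) * Real.log 2) atTop
          (𝓝 ((1-d) * Real.log a + d * Real.log (1-a) + 1 * Real.log 2)) :=
        (((tendsto_const_nhds.sub hI_tendsto).mul_const _).add
          (hI_tendsto.mul_const _)).add (hw.mul_const _)
      have heql : (1-d) * Real.log a + d * Real.log (1-a) + 1 * Real.log 2 = l := by
        rw [hldef]; ring
      rw [heql] at hbase
      apply hbase.congr'
      filter_upwards [eventually_ge_atTop 1] with n hn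
      have hn0 : (n:ℝ) ≠ 0 := by
        have : (0:ℝ) < n := by exact_mod_cast hn
        linarith
      rw [hGdef]
      field_simp
    have hev : ∀ᶠ n in atTop, G n / n < l/2 := hGdiv.eventually_lt_const (by linarith)
    apply squeeze_zero' (g := fun n : ℕ => Real.exp (l/2) ^ n)
    · filter_upwards with n
      have := hP_pos n
      positivity
    · filter_upwards [hev, eventually_ge_atTop 1] with n h1 h2
      have hn0 : (0:ℝ) < n := by exact_mod_cast h2
      rw [hexp n]
      have hGn : G n < (l/2) * n := by
        rw [div_lt_iff₀ hn0] at h1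
        linarith
      calc Real.exp (G n) ≤ Real.exp ((l/2) * n) := Real.exp_le_exp.mpr (le_of_lt hGn)
        _ = Real.exp (l/2) ^ n := by rw [mul_comm, Real.exp_nat_mul]
    · exact tendsto_pow_atTop_nhds_zero_of_lt_one (Real.exp_nonneg _)
        (Real.exp_lt_one_iff.mpr (by linarith))
  have hA : Tendsto (fun n => P n * 2^(z n)) atTop (𝓝 0) := hAgen z hz_tendsto
  have hA' : Tendsto (fun n => P n * 2^(z' n)) atTop (𝓝 0) := hAgen z' hz'_tendsto
  -- bound on L
  obtain ⟨C, hC⟩ : ∃ C, ∀ y ∈ Set.Icc (0:ℝ) 1, |L y| ≤ C := by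
    obtain ⟨C, hC0⟩ := isCompact_Icc.exists_bound_of_continuousOn hL.1
    exact ⟨C, fun y hy => by simpa [Real.norm_eq_abs] using hC0 y hy⟩
  have hCnn : 0 ≤ C := le_trans (abs_nonneg _) (hC 0 ⟨le_refl 0, by norm_num⟩)
  -- oscillation bound on dyadic intervals
  have hSP : ∀ n, ∀ y ∈ Set.Icc (0:ℝ) 1, L (S n + y/2^n) = L (S n) + P n * L y :=
    fun n y hy => deRham_key a ha0 ha1 L hL ε hε n y hy
  have hosc : ∀ n, ∀ v w : ℝ, v ∈ Set.Icc (S n) (S n + ((2:ℝ)^n)⁻¹) →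
      w ∈ Set.Icc (S n) (S n + ((2:ℝ)^n)⁻¹) → |L w - L v| ≤ 2 * C * P n := by
    intro n v w hv hw
    have h2n : (0:ℝ) < 2^n := by positivity
    have hrep : ∀ t ∈ Set.Icc (S n) (S n + ((2:ℝ)^n)⁻¹),
        L t = L (S n) + P n * L (2^n * (t - S n)) ∧ 2^n * (t - S n) ∈ Set.Icc (0:ℝ) 1 := by
      intro t ht
      have hy : 2^n * (t - S n) ∈ Set.Icc (0:ℝ) 1 := by
        constructor
        · have := ht.1; nlinarith
        · have h1 : t - S n ≤ ((2:ℝ)^n)⁻¹ := by linarith [ht.2]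
          calc 2^n * (t - S n) ≤ 2^n * ((2:ℝ)^n)⁻¹ := by nlinarith
            _ = 1 := mul_inv_cancel₀ (ne_of_gt h2n)
      refine ⟨?_, hy⟩
      have harg : t = S n + (2^n * (t - S n))/2^n := by field_simp; ring
      conv_lhs => rw [harg]
      exact hSP n _ hy
    obtain ⟨hv1, hv2⟩ := hrep v hv
    obtain ⟨hw1, hw2⟩ := hrep w hw
    rw [hv1, hw1]
    have heq : L (S n) + P n * L (2^n*(w - S n)) - (L (S n) + P n * L (2^n*(v - S n)))
        = P n * (L (2^n*(w-S n)) - L (2^n*(v-S n))) := by ring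
    rw [heq, abs_mul, abs_of_pos (hP_pos n)]
    have htri : |L (2^n*(w-S n)) - L (2^n*(v-S n))| ≤ C + C := by
      have t1 := hC _ hw2
      have t2 := hC _ hv2
      have := abs_sub_abs_le_abs_sub (L (2^n*(w-S n))) (L (2^n*(v-S n)))
      calc |L (2^n*(w-S n)) - L (2^n*(v-S n))| ≤ |L (2^n*(w-S n))| + |L (2^n*(v-S n))| := by
            simpa [Real.norm_eq_abs] using norm_sub_le (L (2^n*(w-S n))) (L (2^n*(v-S n)))
        _ ≤ C + C := by linarith
    calc P n * |L (2^n*(w-S n)) - L (2^n*(v-S n))| ≤ P n * (C + C) :=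
          mul_le_mul_of_nonneg_left htri (le_of_lt (hP_pos n))
      _ = 2 * C * P n := by ring
  -- final assembly
  have hgap_eq : ∀ m, gap m = ((2:ℝ)^m)⁻¹ - r m := fun m => rfl
  clear_value u S I P r gap z z'
  classical
  rw [Metric.tendsto_nhdsWithin_nhds]
  intro η hη
  have t1 : Tendsto (fun n => 2*C*(P n * 2^(z n))) atTop (𝓝 0) := by
    simpa using hA.const_mul (2*C)
  have t2 : Tendsto (fun n => 2*C*(P n * 2^(z' n))) atTop (𝓝 0) := by
    simpa using hA'.const_mul (2*C)
  have hev2 : ∀ᶠ n in atTop, 2*C*(P n * 2^(z n)) < η ∧ 2*C*(P n * 2^(z' n)) < η := by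
    filter_upwards [t1.eventually_lt_const hη, t2.eventually_lt_const hη] with n h1 h2
    exact ⟨h1, h2⟩
  obtain ⟨N, hN⟩ := eventually_atTop.mp hev2
  refine ⟨min (gap N) (r N), lt_min (hgap_pos N) (hr_pos N), ?_⟩
  intro h hne hdist
  rw [Real.dist_eq, sub_zero] at hdist
  rw [Real.dist_eq, sub_zero]
  have hne' : h ≠ 0 := hne
  have hx_in : ∀ n, x ∈ Set.Icc (S n) (S n + ((2:ℝ)^n)⁻¹) := by
    intro n
    have h1 := hr_pos n
    have h2 := hgap_pos n
    have h3 := hgap_eq n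
    rw [hxr n]
    constructor <;> [linarith; linarith]
  rcases lt_or_gt_of_ne hne' with hneg | hpos
  · -- h < 0
    set g : ℝ := -h with hgdef
    have hg : 0 < g := by rw [hgdef]; linarith
    have habs : |h| = g := by rw [abs_of_neg hneg]
    rw [habs] at hdist
    have hhr : g < r N := lt_of_lt_of_le hdist (min_le_right _ _)
    have hexm : ∃ m, r m < g := by
      obtain ⟨m, hm⟩ := exists_pow_lt_of_lt_one hg (by norm_num : (1/2:ℝ) < 1)
      refine ⟨m, lt_of_le_of_lt ?_ hm⟩
      have h1 := hgap_pos m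
      have h3 := hgap_eq m
      have h12 : ((1:ℝ)/2)^m = ((2:ℝ)^m)⁻¹ := by rw [one_div, inv_pow]
      rw [h12]
      linarith
    set m0 := Nat.find hexm with hm0def
    have hm0spec : r m0 < g := Nat.find_spec hexm
    have hm0N : N < m0 := by
      by_contra hcon
      push_neg at hcon
      have : r N ≤ r m0 := hr_anti hcon
      linarith
    set n := m0 - 1 with hndef
    have hnN : N ≤ n := by omega
    have hrn : g ≤ r n := by
      have h5 := Nat.find_min hexm (show n < m0 by omega)
      linarith [not_lt.mp h5]
    have hrn1 : r (n+1) < g := by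
      have h5 : n + 1 = m0 := by omega
      rw [h5]; exact hm0spec
    have hx2 : x + h ∈ Set.Icc (S n) (S n + ((2:ℝ)^n)⁻¹) := by
      have h1 := hgap_pos n
      have h3 := hgap_eq n
      rw [hxr n]
      constructor
      · have : S n + r n + h = S n + (r n - g) := by rw [hgdef]; ring
        rw [this]
        linarith
      · have h6 := hr_pos n
        have : S n + r n + h ≤ S n + r n := by linarith
        linarith
    have hosc' := hosc n x (x+h) (hx_in n) hx2
    have hZ : ((2:ℝ)^(z' n))⁻¹ ≤ r (n+1) :=
      hr_lb (n+1) (z' n) (by have := hz'_ge n; omega) (hz'_eq n)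
    have hinvlt : ((2:ℝ)^(z' n))⁻¹ < g := lt_of_le_of_lt hZ hrn1
    have hinv : g⁻¹ ≤ 2^(z' n) := by
      have h7 : g⁻¹ ≤ (((2:ℝ)^(z' n))⁻¹)⁻¹ :=
        inv_anti₀ (by positivity) (le_of_lt hinvlt)
      rwa [inv_inv] at h7
    rw [abs_div, habs, div_eq_mul_inv]
    calc |L (x+h) - L x| * g⁻¹ ≤ (2*C*P n) * 2^(z' n) := by
          apply mul_le_mul hosc' hinv (inv_nonneg.mpr (le_of_lt hg))
          have := hP_pos n
          positivity
      _ = 2*C*(P n * 2^(z' n)) := by ring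
      _ < η := (hN n hnN).2
  · -- h > 0
    have habs : |h| = h := abs_of_pos hpos
    rw [habs] at hdist
    have hhgap : h < gap N := lt_of_lt_of_le hdist (min_le_left _ _)
    have hexm : ∃ m, gap m < h := by
      obtain ⟨m, hm⟩ := exists_pow_lt_of_lt_one hpos (by norm_num : (1/2:ℝ) < 1)
      refine ⟨m, lt_of_le_of_lt ?_ hm⟩
      have h1 := hr_pos m
      have h3 := hgap_eq m
      have h12 : ((1:ℝ)/2)^m = ((2:ℝ)^m)⁻¹ := by rw [one_div, inv_pow]
      rw [h12, h3]
      linarith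
    set m0 := Nat.find hexm with hm0def
    have hm0spec : gap m0 < h := Nat.find_spec hexm
    have hm0N : N < m0 := by
      by_contra hcon
      push_neg at hcon
      have : gap N ≤ gap m0 := hgap_anti hcon
      linarith
    set n := m0 - 1 with hndef
    have hnN : N ≤ n := by omega
    have hgapn : h ≤ gap n := by
      have h5 := Nat.find_min hexm (show n < m0 by omega)
      linarith [not_lt.mp h5]
    have hgapn1 : gap (n+1) < h := by
      have h5 : n + 1 = m0 := by omega
      rw [h5]; exact hm0spec
    have hx2 : x + h ∈ Set.Icc (S n) (S n + ((2:ℝ)^n)⁻¹) := by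
      have h1 := hr_pos n
      have h3 := hgap_eq n
      rw [hxr n]
      constructor
      · linarith
      · have : r n + h ≤ r n + gap n := by linarith
        have h4 : r n + gap n = ((2:ℝ)^n)⁻¹ := by rw [h3]; ring
        have : S n + r n + h ≤ S n + ((2:ℝ)^n)⁻¹ := by linarith
        linarith
    have hosc' := hosc n x (x+h) (hx_in n) hx2
    have hZ : ((2:ℝ)^(z n))⁻¹ ≤ gap (n+1) :=
      hgap_lb (n+1) (z n) (by have := hz_ge n; omega) (hz_eq n)
    have hinvlt : ((2:ℝ)^(z n))⁻¹ < h := lt_of_le_of_lt hZ hgapn1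
    have hinv : h⁻¹ ≤ 2^(z n) := by
      have h7 : h⁻¹ ≤ (((2:ℝ)^(z n))⁻¹)⁻¹ :=
        inv_anti₀ (by positivity) (le_of_lt hinvlt)
      rwa [inv_inv] at h7
    rw [abs_div, habs, div_eq_mul_inv]
    calc |L (x+h) - L x| * h⁻¹ ≤ (2*C*P n) * 2^(z n) := by
          apply mul_le_mul hosc' hinv (inv_nonneg.mpr (le_of_lt hpos))
          have := hP_pos n
          positivity
      _ = 2*C*(P n * 2^(z n)) := by ring
      _ < η := (hN n hnN).1
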